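/- Let (Ω, 𝓕, ℙ) be a probability space and let (x_n)_{n≥0} be a sequence of independent, identically distributed random vectors x_n : Ω → ℝ^d that are almost surely bounded (there is M with ‖x_n‖ ≤ M a.s.). Let f : ℝ^d → ℝ be measurable with 0 ≤ f(x) ≤ 1 for all x and E[f(x_0)] > 0. Let (α_n) satisfy 0 < α_n ≤ 1, ∑_n α_n = ∞, and ∑_n α_n² < ∞. Define ρ_0 ∈ (0, 1], σ_0 ∈ ℝ^d, and the coupled recursions ρ_{n+1} = ρ_n + α_n ( f(x_n) − ρ_n ) and σ_{n+1} = σ_n + α_n ( f(x_n)·x_n − σ_n ). Then almost surely (ρ_n, σ_n) → ( E[f(x_0)], E[f(x_0)·x_0] ), and consequently the ratio m_n = σ_n / ρ_n converges almost surely to E[f(x_0)·x_0] / E[f(x_0)]. -/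

import Mathlib

open MeasureTheory Filter ProbabilityTheory


private lemma prod_Ico_tendsto_zero (α : ℕ → ℝ) (hα0 : ∀ n, 0 < α n) (hα1 : ∀ n, α n ≤ 1)
    (hdiv : ¬ Summable α) (N : ℕ) :
    Tendsto (fun n => ∏ k ∈ Finset.Ico N n, (1 - α k)) atTop (nhds 0) := by
  have hs : Tendsto (fun n => ∑ k ∈ Finset.range n, α k) atTop atTop :=
    (not_summable_iff_tendsto_nat_atTop_of_nonneg (fun n => (hα0 n).le)).1 hdiv
  have hIco : Tendsto (fun n => ∑ k ∈ Finset.Ico N n, α k) atTop atTop := by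
    apply Tendsto.congr' (f₁ := fun n => ∑ k ∈ Finset.range n, α k - ∑ k ∈ Finset.range N, α k)
    · filter_upwards [eventually_ge_atTop N] with n hn
      rw [Finset.sum_Ico_eq_sub _ hn]
    · simpa [sub_eq_add_neg] using
        tendsto_atTop_add_const_right atTop (-(∑ k ∈ Finset.range N, α k)) hs
  have hexp : Tendsto (fun n => Real.exp (-(∑ k ∈ Finset.Ico N n, α k))) atTop (nhds 0) :=
    Real.tendsto_exp_atBot.comp (tendsto_neg_atBot_iff.2 hIco)
  apply squeeze_zero (fun n => Finset.prod_nonneg fun k _ => by linarith [hα1 k])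
    (fun n => ?_) hexp
  calc ∏ k ∈ Finset.Ico N n, (1 - α k) ≤ ∏ k ∈ Finset.Ico N n, Real.exp (-α k) :=
        Finset.prod_le_prod (fun k _ => by linarith [hα1 k])
          (fun k _ => by linarith [Real.add_one_le_exp (-α k)])
    _ = Real.exp (-(∑ k ∈ Finset.Ico N n, α k)) := by
        rw [← Real.exp_sum]; congr 1; rw [Finset.sum_neg_distrib]

private lemma det_aux {E : Type*} [NormedAddCommGroup E] [NormedSpace ℝ E]
    (α : ℕ → ℝ) (hα0 : ∀ n, 0 < α n) (hα1 : ∀ n, α n ≤ 1) (hdiv : ¬ Summable α)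
    (r : ℕ → E) (hr : Tendsto r atTop (nhds 0))
    (z : ℕ → E) (hz : ∀ n, z (n + 1) = z n + α n • (r n - z n)) :
    Tendsto z atTop (nhds 0) := by
  rw [tendsto_zero_iff_norm_tendsto_zero, Metric.tendsto_atTop]
  intro ε hε
  have hr' : ∀ᶠ n in atTop, ‖r n‖ < ε / 3 :=
    (tendsto_zero_iff_norm_tendsto_zero.1 hr).eventually (eventually_lt_nhds (by linarith))
  obtain ⟨N₁, hN₁⟩ := eventually_atTop.1 hr'
  have key : ∀ n, N₁ ≤ n →
      ‖z n‖ ≤ ε / 3 + (∏ k ∈ Finset.Ico N₁ n, (1 - α k)) * ‖z N₁‖ := by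
    intro n hn
    induction n, hn using Nat.le_induction with
    | base => simp; linarith [norm_nonneg (z N₁)]
    | succ n hn ih =>
      have hzs : z (n + 1) = (1 - α n) • z n + α n • r n := by
        rw [hz n]; module
      have h1 : ‖z (n + 1)‖ ≤ (1 - α n) * ‖z n‖ + α n * ‖r n‖ := by
        rw [hzs]
        calc ‖(1 - α n) • z n + α n • r n‖ ≤ ‖(1 - α n) • z n‖ + ‖α n • r n‖ := norm_add_le _ _
          _ = (1 - α n) * ‖z n‖ + α n * ‖r n‖ := by
            rw [norm_smul, norm_smul, Real.norm_eq_abs, Real.norm_eq_abs,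
              abs_of_nonneg (by linarith [hα1 n]), abs_of_nonneg (hα0 n).le]
      have hP : ∏ k ∈ Finset.Ico N₁ (n + 1), (1 - α k)
          = (∏ k ∈ Finset.Ico N₁ n, (1 - α k)) * (1 - α n) :=
        Finset.prod_Ico_succ_top hn _
      have hPn : 0 ≤ ∏ k ∈ Finset.Ico N₁ n, (1 - α k) :=
        Finset.prod_nonneg fun k _ => by linarith [hα1 k]
      have hrn := hN₁ n hn
      have h2 : (1 - α n) * ‖z n‖ ≤ (1 - α n) * (ε / 3 + (∏ k ∈ Finset.Ico N₁ n, (1 - α k)) * ‖z N₁‖) :=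
        mul_le_mul_of_nonneg_left ih (by linarith [hα1 n])
      have h3 : α n * ‖r n‖ ≤ α n * (ε / 3) := mul_le_mul_of_nonneg_left hrn.le (hα0 n).le
      rw [hP]
      nlinarith [hα0 n, hα1 n, norm_nonneg (z N₁)]
  have hP0 : Tendsto (fun n => (∏ k ∈ Finset.Ico N₁ n, (1 - α k)) * ‖z N₁‖) atTop (nhds 0) := by
    simpa using (prod_Ico_tendsto_zero α hα0 hα1 hdiv N₁).mul_const ‖z N₁‖
  have h4 : ∀ᶠ n in atTop, (∏ k ∈ Finset.Ico N₁ n, (1 - α k)) * ‖z N₁‖ < ε / 3 :=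
    hP0.eventually (eventually_lt_nhds (by linarith))
  obtain ⟨N₂, hN₂⟩ := eventually_atTop.1 h4
  refine ⟨max N₁ N₂, fun n hn => ?_⟩
  have h5 := key n (le_trans (le_max_left _ _) hn)
  have h6 := hN₂ n (le_trans (le_max_right _ _) hn)
  rw [Real.dist_eq, sub_zero, abs_of_nonneg (norm_nonneg _)]
  linarith

private lemma det_main {E : Type*} [NormedAddCommGroup E] [NormedSpace ℝ E]
    (α : ℕ → ℝ) (hα0 : ∀ n, 0 < α n) (hα1 : ∀ n, α n ≤ 1) (hdiv : ¬ Summable α)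
    (ξ : ℕ → E) (T : E)
    (hT : Tendsto (fun n => ∑ k ∈ Finset.range n, α k • ξ k) atTop (nhds T))
    (e : ℕ → E) (he : ∀ n, e (n + 1) = e n + α n • (ξ n - e n)) :
    Tendsto e atTop (nhds 0) := by
  set S : ℕ → E := fun n => ∑ k ∈ Finset.range n, α k • ξ k with hS
  set r : ℕ → E := fun n => T - S n with hrdef
  have hr : Tendsto r atTop (nhds 0) := by
    have := tendsto_const_nhds (x := T) (f := atTop (α := ℕ)) |>.sub hT
    simpa using this
  set z : ℕ → E := fun n => e n + r n with hzdef
  have hzrec : ∀ n, z (n + 1) = z n + α n • (r n - z n) := by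
    intro n
    have hS' : S (n + 1) = S n + α n • ξ n := Finset.sum_range_succ _ n
    simp only [hzdef, hrdef, he n, hS']
    module
  have hz0 := det_aux α hα0 hα1 hdiv r hr z hzrec
  have : Tendsto (fun n => z n - r n) atTop (nhds 0) := by simpa using hz0.sub hr
  refine this.congr fun n => by simp [hzdef]

private lemma ae_series {Ω : Type*} [MeasurableSpace Ω] (P : Measure Ω) [IsProbabilityMeasure P]
    (y : ℕ → Ω → ℝ) (hmy : ∀ n, Measurable (y n))
    (hind : iIndepFun y P)
    (C : ℝ) (hC : 0 ≤ C) (hb : ∀ n, ∀ᵐ ω ∂P, |y n ω| ≤ C)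
    (hzero : ∀ n, ∫ ω, y n ω ∂P = 0)
    (α : ℕ → ℝ) (hsq : Summable fun n => α n ^ 2) :
    ∀ᵐ ω ∂P, ∃ T : ℝ,
      Tendsto (fun n => ∑ k ∈ Finset.range n, α k * y k ω) atTop (nhds T) := by
  set z : ℕ → Ω → ℝ := fun n ω => α n * y n ω with hzdef
  have hmz : ∀ n, Measurable (z n) := fun n => (hmy n).const_mul _
  have hsmz : ∀ n, StronglyMeasurable (z n) := fun n => (hmz n).stronglyMeasurable
  have hbz : ∀ n, ∀ᵐ ω ∂P, |z n ω| ≤ |α n| * C := by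
    intro n
    filter_upwards [hb n] with ω hω
    rw [hzdef]; simp only [abs_mul]
    exact mul_le_mul_of_nonneg_left hω (abs_nonneg _)
  have hzint : ∀ n, Integrable (z n) P := by
    intro n
    refine (integrable_const (|α n| * C)).mono' (hmz n).aestronglyMeasurable ?_
    filter_upwards [hbz n] with ω hω using by simpa using hω
  have hz2 : ∀ n, MemLp (z n) 2 P := by
    intro n
    refine memLp_of_bounded (a := -(|α n| * C)) (b := |α n| * C) ?_ (hmz n).aestronglyMeasurable 2
    filter_upwards [hbz n] with ω hω using abs_le.1 hω
  have hzzero : ∀ n, ∫ ω, z n ω ∂P = 0 := by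
    intro n; rw [hzdef]; simp only
    rw [integral_const_mul, hzero n, mul_zero]
  have hindz : iIndepFun z P := by
    have := hind.comp (fun n => fun v : ℝ => α n * v) (fun n => measurable_const_mul _)
    exact this
  set ℱ := Filtration.natural z hsmz with hFdef
  set S : ℕ → Ω → ℝ := fun n ω => ∑ k ∈ Finset.range (n + 1), z k ω with hSdef
  have hadp : StronglyAdapted ℱ S := by
    intro n
    refine Finset.stronglyMeasurable_fun_sum _ fun k hk => ?_
    exact ((Filtration.stronglyAdapted_natural hsmz) k).mono
      (ℱ.mono (Nat.lt_succ_iff.1 (Finset.mem_range.1 hk)))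
  have hSint : ∀ n, Integrable (S n) P := by
    intro n; exact integrable_finset_sum _ fun k _ => hzint k
  have hmart : Martingale S ℱ P := by
    refine ⟨hadp, fun i j hij => ?_⟩
    set D : Ω → ℝ := fun ω => ∑ k ∈ Finset.Ico (i + 1) (j + 1), z k ω with hDdef
    have hDint : Integrable D P := integrable_finset_sum _ fun k _ => hzint k
    have hsplit : S j = S i + D := by
      funext ω
      simp only [hSdef, hDdef, Pi.add_apply]
      rw [Finset.range_eq_Ico,
        ← Finset.sum_Ico_consecutive _ (Nat.zero_le (i + 1)) (by omega), Finset.range_eq_Ico]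
    rw [hsplit]
    refine (condExp_add (hSint i) hDint _).trans ?_
    have h1 : P[S i|ℱ i] = S i :=
      condExp_of_stronglyMeasurable (ℱ.le i) (hadp i) (hSint i)
    have h2 : P[D|ℱ i] =ᵐ[P] 0 := by
      have hD : D = ∑ k ∈ Finset.Ico (i + 1) (j + 1), z k := by
        funext ω; simp [hDdef]
      rw [hD]
      refine (condExp_finsetSum (fun k _ => hzint k) _).trans ?_
      have h3 : ∀ k ∈ Finset.Ico (i + 1) (j + 1), P[z k|ℱ i] =ᵐ[P] 0 := by
        intro k hk
        have hik : i < k := (Finset.mem_Ico.1 hk).1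
        refine (hindz.condExp_natural_ae_eq_of_lt hsmz hik).trans ?_
        rw [hzzero k]; rfl
      calc (∑ k ∈ Finset.Ico (i + 1) (j + 1), P[z k|ℱ i])
          =ᵐ[P] ∑ k ∈ Finset.Ico (i + 1) (j + 1), (0 : Ω → ℝ) :=
            eventuallyEq_sum h3
        _ = 0 := by simp
    rw [h1]
    filter_upwards [h2] with ω hω
    simp only [Pi.add_apply, hω, Pi.zero_apply, add_zero]
  set V : ℝ := C ^ 2 * ∑' n, α n ^ 2 with hVdef
  have hSzero : ∀ n, ∫ ω, S n ω ∂P = 0 := by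
    intro n
    rw [integral_finset_sum _ fun k _ => hzint k]
    simp [hzzero]
  have hS2 : ∀ n, MemLp (S n) 2 P := by
    intro n
    have h : (∑ k ∈ Finset.range (n + 1), z k) = S n := by funext ω; simp [hSdef]
    rw [← h]
    exact memLp_finset_sum' _ fun k _ => hz2 k
  have hvar : ∀ n, variance (S n) P ≤ V := by
    intro n
    have hfun : S n = ∑ k ∈ Finset.range (n + 1), z k := by funext ω; simp [hSdef]
    have hvs : variance (S n) P = ∑ k ∈ Finset.range (n + 1), variance (z k) P := by
      rw [hfun]
      exact IndepFun.variance_sum (fun k _ => hz2 k)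
        (fun k _ l _ hkl => hindz.indepFun hkl)
    rw [hvs]
    have hzk : ∀ k, variance (z k) P ≤ α k ^ 2 * C ^ 2 := by
      intro k
      have hm : variance (z k) P = α k ^ 2 * variance (y k) P := variance_const_mul (α k) (y k) P
      have hyk : variance (y k) P ≤ C ^ 2 := by
        have hIcc : ∀ᵐ ω ∂P, y k ω ∈ Set.Icc (-C) C := by
          filter_upwards [hb k] with ω hω using abs_le.1 hω
        have h2 := variance_le_sq_of_bounded hIcc (hmy k).aemeasurable
        calc variance (y k) P ≤ ((C - -C) / 2) ^ 2 := h2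
          _ = C ^ 2 := by ring
      rw [hm]
      exact mul_le_mul_of_nonneg_left hyk (sq_nonneg _)
    calc ∑ k ∈ Finset.range (n + 1), variance (z k) P
        ≤ ∑ k ∈ Finset.range (n + 1), α k ^ 2 * C ^ 2 := Finset.sum_le_sum fun k _ => hzk k
      _ = (∑ k ∈ Finset.range (n + 1), α k ^ 2) * C ^ 2 := by rw [← Finset.sum_mul]
      _ ≤ (∑' n, α n ^ 2) * C ^ 2 :=
          mul_le_mul_of_nonneg_right
            (Summable.sum_le_tsum _ (fun k _ => sq_nonneg _) hsq) (sq_nonneg C)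
      _ = V := by rw [hVdef]; ring
  have hES2 : ∀ n, ∫ ω, (S n ω) ^ 2 ∂P ≤ V := by
    intro n
    have h := variance_eq_sub (hS2 n)
    simp only [Pi.pow_apply] at h
    rw [hSzero n] at h
    linarith [hvar n]
  set B : ℝ := (1 + V) / 2 with hBdef
  have hL1 : ∀ n, ∫ ω, ‖S n ω‖ ∂P ≤ B := by
    intro n
    have hint2 : Integrable (fun ω => (S n ω) ^ 2) P := (hS2 n).integrable_sq
    have hint3 : Integrable (fun ω => (1 + (S n ω) ^ 2) / 2) P :=
      ((integrable_const 1).add hint2).div_const 2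
    have hmono : ∀ ω, ‖S n ω‖ ≤ (1 + (S n ω) ^ 2) / 2 := by
      intro ω; rw [Real.norm_eq_abs]
      nlinarith [sq_nonneg (|S n ω| - 1), sq_abs (S n ω), abs_nonneg (S n ω)]
    calc ∫ ω, ‖S n ω‖ ∂P ≤ ∫ ω, (1 + (S n ω) ^ 2) / 2 ∂P :=
          integral_mono (hSint n).norm hint3 hmono
      _ = (1 + ∫ ω, (S n ω) ^ 2 ∂P) / 2 := by
          rw [integral_div, integral_add (integrable_const 1) hint2]
          simp
      _ ≤ B := by rw [hBdef]; linarith [hES2 n]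
  have hbddS : ∀ n, eLpNorm (S n) 1 P ≤ (Real.toNNReal B : ENNReal) := by
    intro n
    rw [eLpNorm_one_eq_lintegral_enorm, ← ofReal_integral_norm_eq_lintegral_enorm (hSint n)]
    exact ENNReal.ofReal_le_ofReal (hL1 n)
  have hconv := hmart.submartingale.exists_ae_tendsto_of_bdd hbddS
  filter_upwards [hconv] with ω hω
  obtain ⟨c, hc⟩ := hω
  refine ⟨c, ?_⟩
  have h' : Tendsto (fun n => ∑ k ∈ Finset.range (n + 1), α k * y k ω) atTop (nhds c) :=
    hc.congr fun n => rfl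
  exact (tendsto_add_atTop_iff_nat 1).1 h'


private lemma coord_abs_le_norm {d : ℕ} (i : Fin d) (w : EuclideanSpace ℝ (Fin d)) :
    |w i| ≤ ‖w‖ := by
  rw [EuclideanSpace.norm_eq, ← Real.sqrt_sq_eq_abs]
  apply Real.sqrt_le_sqrt
  simp only [Real.norm_eq_abs, sq_abs]
  exact Finset.single_le_sum (f := fun j => w j ^ 2) (fun j _ => sq_nonneg _) (Finset.mem_univ i)

/-- Gradient-free online training rule (ODA): with a.s. bounded i.i.d. samples `xₙ`,
association weights `f ∈ [0,1]` with `E[f(x₀)] > 0`, and Robbins–Monro step sizes,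
the coupled iterates `ρ_{n+1} = ρₙ + αₙ (f(xₙ) - ρₙ)`,
`σ_{n+1} = σₙ + αₙ (f(xₙ) • xₙ - σₙ)` converge a.s. to
`(E[f(x₀)], E[f(x₀) • x₀])`, and `mₙ = σₙ / ρₙ → E[f(x₀) • x₀] / E[f(x₀)]`. -/
theorem oda_learning_rule (d : ℕ)
    {Ω : Type*} [MeasurableSpace Ω] (P : Measure Ω) [IsProbabilityMeasure P]
    (x : ℕ → Ω → EuclideanSpace ℝ (Fin d))
    (hmeas : ∀ n, Measurable (x n))
    (hindep : iIndepFun x P)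
    (hident : ∀ n, IdentDistrib (x n) (x 0) P P)
    (M : ℝ) (hbdd : ∀ n, ∀ᵐ ω ∂P, ‖x n ω‖ ≤ M)
    (f : EuclideanSpace ℝ (Fin d) → ℝ) (hf : Measurable f)
    (hf0 : ∀ y, 0 ≤ f y) (hf1 : ∀ y, f y ≤ 1)
    (hmean : 0 < ∫ ω', f (x 0 ω') ∂P)
    (α : ℕ → ℝ) (hα0 : ∀ n, 0 < α n) (hα1 : ∀ n, α n ≤ 1)
    (hdiv : ¬ Summable α) (hsq : Summable fun n => (α n) ^ 2)
    (ρ : ℕ → Ω → ℝ) (σ : ℕ → Ω → EuclideanSpace ℝ (Fin d))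
    (ρ₀ : ℝ) (hρ₀ : 0 < ρ₀ ∧ ρ₀ ≤ 1) (σ₀ : EuclideanSpace ℝ (Fin d))
    (h0ρ : ∀ ω, ρ 0 ω = ρ₀) (h0σ : ∀ ω, σ 0 ω = σ₀)
    (hrecρ : ∀ n ω, ρ (n + 1) ω = ρ n ω + α n * (f (x n ω) - ρ n ω))
    (hrecσ : ∀ n ω, σ (n + 1) ω = σ n ω + α n • (f (x n ω) • x n ω - σ n ω)) :
    ∀ᵐ ω ∂P,
      Tendsto (fun n => ρ n ω) atTop (nhds (∫ ω', f (x 0 ω') ∂P)) ∧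
      Tendsto (fun n => σ n ω) atTop (nhds (∫ ω', f (x 0 ω') • x 0 ω' ∂P)) ∧
      Tendsto (fun n => (ρ n ω)⁻¹ • σ n ω) atTop
        (nhds ((∫ ω', f (x 0 ω') ∂P)⁻¹ • ∫ ω', f (x 0 ω') • x 0 ω' ∂P)) := by
  haveI : (MeasureTheory.ae P).NeBot := ae_neBot.2 (IsProbabilityMeasure.ne_zero P)
  set m : ℝ := ∫ ω', f (x 0 ω') ∂P with hm
  set v : EuclideanSpace ℝ (Fin d) := ∫ ω', f (x 0 ω') • x 0 ω' ∂P with hv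
  have hfx_meas : ∀ n, Measurable fun ω => f (x n ω) := fun n => hf.comp (hmeas n)
  have habs1 : ∀ n ω, |f (x n ω)| ≤ 1 := by
    intro n ω; rw [abs_le]; exact ⟨by linarith [hf0 (x n ω)], hf1 _⟩
  have hfx_int : ∀ n, Integrable (fun ω => f (x n ω)) P := by
    intro n
    refine (integrable_const (1 : ℝ)).mono' (hfx_meas n).aestronglyMeasurable ?_
    exact ae_of_all _ fun ω => by rw [Real.norm_eq_abs]; exact habs1 n ω
  have hmeq : ∀ n, ∫ ω, f (x n ω) ∂P = m := fun n => ((hident n).comp hf).integral_eq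
  have hM0 : 0 ≤ M := by
    obtain ⟨ω, hω⟩ := (hbdd 0).exists
    exact le_trans (norm_nonneg _) hω
  -- the ρ series
  have keyρ : ∀ᵐ ω ∂P, ∃ T : ℝ,
      Tendsto (fun n => ∑ k ∈ Finset.range n, α k * (f (x k ω) - m)) atTop (nhds T) := by
    refine ae_series P (fun n ω => f (x n ω) - m)
      (fun n => (hfx_meas n).sub measurable_const) ?_ 2 (by norm_num) ?_ ?_ α hsq
    · exact hindep.comp (fun _ : ℕ => fun w => f w - m) (fun _ => hf.sub measurable_const)
    · intro n
      refine ae_of_all _ fun ω => ?_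
      have h1 : m ≤ 1 := by
        rw [hm]
        calc ∫ ω', f (x 0 ω') ∂P ≤ ∫ _ω', (1 : ℝ) ∂P :=
              integral_mono (hfx_int 0) (integrable_const 1) fun ω' => hf1 _
          _ = 1 := by simp
      have h2 := hf0 (x n ω); have h3 := hf1 (x n ω)
      show |f (x n ω) - m| ≤ 2
      rw [abs_le]; constructor <;> linarith
    · intro n
      rw [integral_sub (hfx_int n) (integrable_const m), hmeq n, integral_const]
      simp
  -- coordinates of σ
  have hcoordmeas : ∀ i : Fin d, Measurable fun w : EuclideanSpace ℝ (Fin d) => w i :=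
    fun i => (measurable_pi_apply i).comp (WithLp.measurable_ofLp 2 _)
  have hgx_meas : ∀ (i : Fin d) (n), Measurable fun ω => f (x n ω) * x n ω i :=
    fun i n => (hfx_meas n).mul ((hcoordmeas i).comp (hmeas n))
  have hgx_bd : ∀ (i : Fin d) (n), ∀ᵐ ω ∂P, |f (x n ω) * x n ω i| ≤ M := by
    intro i n
    filter_upwards [hbdd n] with ω hω
    calc |f (x n ω) * x n ω i| = |f (x n ω)| * |x n ω i| := abs_mul _ _
      _ ≤ 1 * M :=
        mul_le_mul (habs1 n ω) (le_trans (coord_abs_le_norm i _) hω) (abs_nonneg _) zero_le_one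
      _ = M := one_mul M
  have hgx_int : ∀ (i : Fin d) (n), Integrable (fun ω => f (x n ω) * x n ω i) P := by
    intro i n
    refine (integrable_const M).mono' (hgx_meas i n).aestronglyMeasurable ?_
    filter_upwards [hgx_bd i n] with ω hω using by rwa [Real.norm_eq_abs]
  have hsmul_int : Integrable (fun ω => f (x 0 ω) • x 0 ω) P := by
    refine (integrable_const M).mono'
      ((hfx_meas 0).aestronglyMeasurable.smul (hmeas 0).aestronglyMeasurable) ?_
    filter_upwards [hbdd 0] with ω hω
    rw [norm_smul, Real.norm_eq_abs]
    calc |f (x 0 ω)| * ‖x 0 ω‖ ≤ 1 * M :=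
          mul_le_mul (habs1 0 ω) hω (norm_nonneg _) zero_le_one
      _ = M := one_mul M
  have hvi : ∀ i : Fin d, v i = ∫ ω, f (x 0 ω) * x 0 ω i ∂P := by
    intro i
    have h := (EuclideanSpace.proj (𝕜 := ℝ) i).integral_comp_comm hsmul_int
    simpa [smul_eq_mul] using h.symm
  have hmeanc : ∀ (i : Fin d) (n), ∫ ω, f (x n ω) * x n ω i ∂P = v i := by
    intro i n
    rw [hvi i]
    exact ((hident n).comp (hf.mul (hcoordmeas i))).integral_eq
  have keyσ : ∀ i : Fin d, ∀ᵐ ω ∂P, ∃ T : ℝ,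
      Tendsto (fun n => ∑ k ∈ Finset.range n, α k * (f (x k ω) * x k ω i - v i))
        atTop (nhds T) := by
    intro i
    refine ae_series P (fun n ω => f (x n ω) * x n ω i - v i)
      (fun n => (hgx_meas i n).sub measurable_const) ?_ (M + |v i|) (by positivity) ?_ ?_ α hsq
    · exact hindep.comp (fun _ : ℕ => fun w => f w * w i - v i)
        (fun _ => (hf.mul (hcoordmeas i)).sub measurable_const)
    · intro n
      filter_upwards [hgx_bd i n] with ω hω
      have h1 : |f (x n ω) * x n ω i - v i| ≤ |f (x n ω) * x n ω i| + |v i| :=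
        abs_sub _ _
      show |f (x n ω) * x n ω i - v i| ≤ M + |v i|
      linarith
    · intro n
      rw [integral_sub (hgx_int i n) (integrable_const _), hmeanc i n, integral_const]
      simp
  -- combine
  filter_upwards [keyρ, ae_all_iff.2 keyσ] with ω hωρ hωσ
  have hρlim : Tendsto (fun n => ρ n ω) atTop (nhds m) := by
    obtain ⟨T, hT⟩ := hωρ
    have he : ∀ n, ρ (n + 1) ω - m
        = (ρ n ω - m) + α n • ((f (x n ω) - m) - (ρ n ω - m)) := by
      intro n; rw [hrecρ n ω]; simp only [smul_eq_mul]; ring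
    have h0 := det_main α hα0 hα1 hdiv (fun n => f (x n ω) - m) T
      (by simpa [smul_eq_mul] using hT) (fun n => ρ n ω - m) he
    have h2 := h0.add_const m
    simpa using h2
  have hσi : ∀ i : Fin d, Tendsto (fun n => σ n ω i) atTop (nhds (v i)) := by
    intro i
    obtain ⟨T, hT⟩ := hωσ i
    have he : ∀ n, σ (n + 1) ω i - v i
        = (σ n ω i - v i) + α n • ((f (x n ω) * x n ω i - v i) - (σ n ω i - v i)) := by
      intro n
      have h1 : σ (n + 1) ω i = σ n ω i + α n * (f (x n ω) * x n ω i - σ n ω i) := by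
        rw [hrecσ n ω]
        simp [PiLp.add_apply, PiLp.smul_apply, PiLp.sub_apply, smul_eq_mul]
      rw [h1]; simp only [smul_eq_mul]; ring
    have h0 := det_main α hα0 hα1 hdiv (fun n => f (x n ω) * x n ω i - v i) T
      (by simpa [smul_eq_mul] using hT) (fun n => σ n ω i - v i) he
    have h2 := h0.add_const (v i)
    simpa using h2
  have hσlim : Tendsto (fun n => σ n ω) atTop (nhds v) := by
    have hpi : Tendsto (fun n => (PiLp.continuousLinearEquiv 2 ℝ (fun _ : Fin d => ℝ)) (σ n ω))
        atTop (nhds ((PiLp.continuousLinearEquiv 2 ℝ (fun _ : Fin d => ℝ)) v)) := by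
      rw [tendsto_pi_nhds]; exact fun i => hσi i
    have h := ((PiLp.continuousLinearEquiv 2 ℝ
      (fun _ : Fin d => ℝ)).symm.continuous.tendsto _).comp hpi
    simpa [Function.comp_def] using h
  refine ⟨hρlim, hσlim, ?_⟩
  exact (hρlim.inv₀ (ne_of_gt hmean)).smul hσlim
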